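/- Let G be a simple graph that is strongly regular with parameters (10, 3, 0, 1). For all vertices c₁, c₂ and every vertex r with r ∉ N[c₁] ∪ N[c₂], there exists a neighbor s of r such that s ∉ N[c₁] ∪ N[c₂]. (A robber on a vertex not dominated by either of two cops is always adjacent to a vertex not dominated by either cop.) -/

import Mathlib

theorem stmt_11 {V : Type*} [Fintype V] (G : SimpleGraph V) [DecidableRel G.Adj]
    (hG : G.IsSRGWith 10 3 0 1) (c₁ c₂ r : V)
    (hr : r ∉ (G.neighborSet c₁ ∪ {c₁}) ∪ (G.neighborSet c₂ ∪ {c₂})) :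
    ∃ s, G.Adj r s ∧ s ∉ (G.neighborSet c₁ ∪ {c₁}) ∪ (G.neighborSet c₂ ∪ {c₂}) := by
  classical
  simp only [Set.mem_union, Set.mem_singleton_iff, SimpleGraph.mem_neighborSet, not_or] at hr
  obtain ⟨⟨h1, h2⟩, h3, h4⟩ := hr
  -- each cop is adjacent to exactly one neighbor of r
  have key : ∀ c : V, ¬ G.Adj c r → r ≠ c →
      ((G.neighborFinset r).filter (fun s => G.Adj c s)).card = 1 := by
    intro c hadj hne
    have hcard : Fintype.card (G.commonNeighbors r c) = 1 :=
      hG.of_not_adj hne (fun h => hadj h.symm)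
    rw [← Set.toFinset_card] at hcard
    rw [← hcard]
    congr 1
    ext x
    rw [Set.mem_toFinset]
    simp [SimpleGraph.commonNeighbors, SimpleGraph.adj_comm]
  have k1 := key c₁ h1 h2
  have k2 := key c₂ h3 h4
  by_contra hcon
  push_neg at hcon
  simp only [Set.mem_union, Set.mem_singleton_iff, SimpleGraph.mem_neighborSet] at hcon
  have hsub : G.neighborFinset r ⊆
      ((G.neighborFinset r).filter (fun s => G.Adj c₁ s)) ∪
      ((G.neighborFinset r).filter (fun s => G.Adj c₂ s)) := by
    intro x hx
    have hadj : G.Adj r x := by rwa [SimpleGraph.mem_neighborFinset] at hx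
    rcases hcon x hadj with (h | h) | (h | h)
    · exact Finset.mem_union_left _ (Finset.mem_filter.mpr ⟨hx, h⟩)
    · exact absurd (h ▸ hadj) (fun hh => h1 hh.symm)
    · exact Finset.mem_union_right _ (Finset.mem_filter.mpr ⟨hx, h⟩)
    · exact absurd (h ▸ hadj) (fun hh => h3 hh.symm)
  have hdeg : (G.neighborFinset r).card = 3 := hG.regular r
  have := Finset.card_le_card hsub
  have hle := Finset.card_union_le ((G.neighborFinset r).filter (fun s => G.Adj c₁ s)) ((G.neighborFinset r).filter (fun s => G.Adj c₂ s))
  omega
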